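/- Let p be an odd prime, Fp = ZMod p, let n ≥ 2, let k be even with 1 ≤ k ≤ n−1, and let s ∈ Fp be a nonsquare (s ≠ 0 and no t ∈ Fp satisfies t² = s). Let D_s be the k×k diagonal matrix diag(1, …, 1, s). Then the number of distinct sets of the form { Q_P·M·Q_P⁻¹ : M ∈ T(n,k,s) }, as P ranges over GL_n(Fp) and Q_P = [[P,0],[0,1]] ∈ GL_{n+1}(Fp), equals |GL_n(Fp)| divided by (p−1) · |{ U a k×k matrix over Fp : Uᵀ·D_s·U = D_s }| · |GL_{n−1−k}(Fp)| · p^{k(n−1−k) + (n−1)}. -/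

import Mathlib

open Matrix

/-- `d_i` (0-indexed): `d i = 1` for `i + 1 < k`, `d i = s` for `i + 1 = k`,
and `d i = 0` otherwise. -/
def dvec (p k : ℕ) (s : ZMod p) (i : ℕ) : ZMod p :=
  if i + 1 < k then 1 else if i + 1 = k then s else 0

/-- The `(n+1)×(n+1)` matrix `τ(r)`: it agrees with the identity except that its
`(i, n+1)` entry is `r_i` for `1 ≤ i ≤ n` and its `(n, j)` entry is `d_j·r_j`
for `1 ≤ j ≤ n-1` (stated here with 0-indexed rows and columns). -/
def tauM (p n k : ℕ) (s : ZMod p) (r : Fin n → ZMod p) :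
    Matrix (Fin (n + 1)) (Fin (n + 1)) (ZMod p) :=
  Matrix.of fun i j =>
    if i.val = j.val then 1
    else if j.val = n then (if h : i.val < n then r ⟨i.val, h⟩ else 0)
    else if i.val = n - 1 then
      dvec p k s j.val * (if h : j.val < n then r ⟨j.val, h⟩ else 0)
    else 0

/-- `T(n,k,s) = { τ(r) : r ∈ Fp^n }`. -/
def Tset (p n k : ℕ) (s : ZMod p) :
    Set (Matrix (Fin (n + 1)) (Fin (n + 1)) (ZMod p)) :=
  { M | ∃ r : Fin n → ZMod p, M = tauM p n k s r }

/-- The block matrix `Q = [[P, 0], [0, 1]]` in `M_{n+1}(Fp)`. -/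
def QofP (p n : ℕ) (P : Matrix (Fin n) (Fin n) (ZMod p)) :
    Matrix (Fin (n + 1)) (Fin (n + 1)) (ZMod p) :=
  Matrix.reindex finSumFinEquiv finSumFinEquiv
    (Matrix.fromBlocks P 0 0 (1 : Matrix (Fin 1) (Fin 1) (ZMod p)))

namespace Stmt10

variable (p n k : ℕ) (s : ZMod p)

lemma dvec_ge {i : ℕ} (hi : k ≤ i) : dvec p k s i = 0 := by
  unfold dvec; rw [if_neg (by omega), if_neg (by omega)]

lemma dvec_zero (hk : 2 ≤ k) : dvec p k s 0 = 1 := by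
  unfold dvec; rw [if_pos (by omega)]

lemma dvec_last (hn : 1 ≤ n) (hk2 : k ≤ n - 1) : dvec p k s (n - 1) = 0 :=
  dvec_ge p k s (by omega)

/-- entries of QofP -/
lemma QofP_cc (P : Matrix (Fin n) (Fin n) (ZMod p)) (a b : Fin n) :
    QofP p n P a.castSucc b.castSucc = P a b := by
  have h1 : finSumFinEquiv.symm (a.castSucc) = Sum.inl a := by
    rw [Equiv.symm_apply_eq, finSumFinEquiv_apply_left]; rfl
  have h2 : finSumFinEquiv.symm (b.castSucc) = Sum.inl b := by
    rw [Equiv.symm_apply_eq, finSumFinEquiv_apply_left]; rfl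
  simp [QofP, h1, h2]

lemma QofP_cl (P : Matrix (Fin n) (Fin n) (ZMod p)) (a : Fin n) :
    QofP p n P a.castSucc (Fin.last n) = 0 := by
  have h1 : finSumFinEquiv.symm (a.castSucc) = Sum.inl a := by
    rw [Equiv.symm_apply_eq, finSumFinEquiv_apply_left]; rfl
  have h2 : finSumFinEquiv.symm (Fin.last n) = Sum.inr (0 : Fin 1) := by
    rw [Equiv.symm_apply_eq, finSumFinEquiv_apply_right]
    ext; simp [Fin.natAdd]
  simp [QofP, h1, h2]

lemma QofP_lc (P : Matrix (Fin n) (Fin n) (ZMod p)) (b : Fin n) :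
    QofP p n P (Fin.last n) b.castSucc = 0 := by
  have h1 : finSumFinEquiv.symm (b.castSucc) = Sum.inl b := by
    rw [Equiv.symm_apply_eq, finSumFinEquiv_apply_left]; rfl
  have h2 : finSumFinEquiv.symm (Fin.last n) = Sum.inr (0 : Fin 1) := by
    rw [Equiv.symm_apply_eq, finSumFinEquiv_apply_right]
    ext; simp [Fin.natAdd]
  simp [QofP, h1, h2]

lemma QofP_ll (P : Matrix (Fin n) (Fin n) (ZMod p)) :
    QofP p n P (Fin.last n) (Fin.last n) = 1 := by
  have h2 : finSumFinEquiv.symm (Fin.last n) = Sum.inr (0 : Fin 1) := by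
    rw [Equiv.symm_apply_eq, finSumFinEquiv_apply_right]
    ext; simp [Fin.natAdd]
  simp [QofP, h2, Matrix.one_apply]

/-- entries of tauM -/
lemma tauM_cc (hn : 1 ≤ n) (r : Fin n → ZMod p) (a b : Fin n) :
    tauM p n k s r a.castSucc b.castSucc =
      if a = b then 1 else if a.val = n - 1 then dvec p k s b.val * r b else 0 := by
  simp only [tauM, Matrix.of_apply, Fin.coe_castSucc]
  rcases eq_or_ne a b with h | h
  · simp [h]
  · rw [if_neg (by simpa [Fin.ext_iff] using h), if_neg h, if_neg (by omega)]
    split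
    · rw [dif_pos b.isLt]
    · rfl

lemma tauM_cl (r : Fin n → ZMod p) (a : Fin n) :
    tauM p n k s r a.castSucc (Fin.last n) = r a := by
  simp only [tauM, Matrix.of_apply, Fin.coe_castSucc, Fin.val_last]
  rw [if_neg (by omega)]
  simp [a.isLt]

lemma tauM_lc (hn : 1 ≤ n) (r : Fin n → ZMod p) (b : Fin n) :
    tauM p n k s r (Fin.last n) b.castSucc = 0 := by
  simp only [tauM, Matrix.of_apply, Fin.coe_castSucc, Fin.val_last]
  rw [if_neg (by omega), if_neg (by omega), if_neg (by omega)]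

lemma tauM_ll (r : Fin n → ZMod p) :
    tauM p n k s r (Fin.last n) (Fin.last n) = 1 := by
  simp [tauM]


section Products
variable (P : Matrix (Fin n) (Fin n) (ZMod p)) (r r' : Fin n → ZMod p)

lemma A_cc (hn : 2 ≤ n) (hk2 : k ≤ n - 1) (a b : Fin n) :
    (QofP p n P * tauM p n k s r) a.castSucc b.castSucc =
      P a b + dvec p k s b.val * r b * P a ⟨n - 1, by omega⟩ := by
  rw [Matrix.mul_apply, Fin.sum_univ_castSucc]
  rw [QofP_cl, zero_mul, add_zero]
  have : ∀ l : Fin n, QofP p n P a.castSucc l.castSucc * tauM p n k s r l.castSucc b.castSucc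
      = P a l * ((if l = b then 1 else 0) + (if l = ⟨n - 1, by omega⟩ then dvec p k s b.val * r b else 0)) := by
    intro l
    rw [QofP_cc, tauM_cc p n k s (by omega)]
    congr 1
    rcases eq_or_ne l b with h | h
    · subst h
      rw [if_pos rfl, if_pos rfl]
      rcases eq_or_ne l (⟨n - 1, by omega⟩ : Fin n) with h2 | h2
      · rw [if_pos h2, h2, dvec_last p n k s (by omega) hk2, zero_mul, add_zero]
      · rw [if_neg h2]; ring
    · rw [if_neg h, if_neg h]
      rcases eq_or_ne l (⟨n - 1, by omega⟩ : Fin n) with h2 | h2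
      · rw [if_pos (by simp [h2]), if_pos h2, zero_add]
      · rw [if_neg (by simpa [Fin.ext_iff] using h2), if_neg h2, zero_add]
  rw [Finset.sum_congr rfl (fun l _ => this l)]
  simp only [mul_add, Finset.sum_add_distrib, mul_ite, mul_one, mul_zero]
  rw [Finset.sum_ite_eq' Finset.univ b, Finset.sum_ite_eq' Finset.univ (⟨n - 1, by omega⟩ : Fin n)]
  simp [mul_comm]

lemma A_cl (a : Fin n) :
    (QofP p n P * tauM p n k s r) a.castSucc (Fin.last n) = P.mulVec r a := by
  rw [Matrix.mul_apply, Fin.sum_univ_castSucc, QofP_cl, zero_mul, add_zero]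
  rw [Matrix.mulVec, dotProduct]
  exact Finset.sum_congr rfl fun l _ => by rw [QofP_cc, tauM_cl]

lemma A_lc (hn : 2 ≤ n) (b : Fin n) :
    (QofP p n P * tauM p n k s r) (Fin.last n) b.castSucc = 0 := by
  rw [Matrix.mul_apply, Fin.sum_univ_castSucc, tauM_lc p n k s (by omega), mul_zero, add_zero]
  refine Finset.sum_eq_zero fun l _ => by rw [QofP_lc, zero_mul]

lemma A_ll : (QofP p n P * tauM p n k s r) (Fin.last n) (Fin.last n) = 1 := by
  rw [Matrix.mul_apply, Fin.sum_univ_castSucc, QofP_ll, tauM_ll, mul_one]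
  rw [Finset.sum_eq_zero fun l _ => by rw [QofP_lc, zero_mul], zero_add]

lemma B_cc (hn : 2 ≤ n) (hk2 : k ≤ n - 1) (a b : Fin n) :
    (tauM p n k s r' * QofP p n P) a.castSucc b.castSucc =
      P a b + (if a.val = n - 1 then
        ∑ l : Fin n, dvec p k s l.val * r' l * P l b else 0) := by
  rw [Matrix.mul_apply, Fin.sum_univ_castSucc, QofP_lc, mul_zero, add_zero]
  have : ∀ l : Fin n, tauM p n k s r' a.castSucc l.castSucc * QofP p n P l.castSucc b.castSucc
      = ((if l = a then 1 else 0) + (if a.val = n - 1 then dvec p k s l.val * r' l else 0)) * P l b := by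
    intro l
    rw [QofP_cc, tauM_cc p n k s (by omega)]
    congr 1
    rcases eq_or_ne a l with h | h
    · subst h
      rw [if_pos rfl, if_pos rfl]
      rcases eq_or_ne a.val (n - 1) with h2 | h2
      · rw [if_pos h2, dvec_ge p k s (by omega), zero_mul, add_zero]
      · rw [if_neg h2, add_zero]
    · rw [if_neg h, if_neg (show ¬(l = a) from fun hh => h hh.symm), zero_add]
  rw [Finset.sum_congr rfl (fun l _ => this l)]
  simp only [add_mul, Finset.sum_add_distrib, ite_mul, one_mul, zero_mul]
  rw [Finset.sum_ite_eq' Finset.univ a]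
  simp only [Finset.mem_univ, if_pos]
  congr 1
  split
  · rfl
  · exact Finset.sum_eq_zero fun l _ => rfl

lemma B_cl (a : Fin n) :
    (tauM p n k s r' * QofP p n P) a.castSucc (Fin.last n) = r' a := by
  rw [Matrix.mul_apply, Fin.sum_univ_castSucc, QofP_ll, tauM_cl, mul_one]
  rw [Finset.sum_eq_zero fun l _ => by rw [QofP_cl, mul_zero], zero_add]

lemma B_lc (hn : 2 ≤ n) (b : Fin n) :
    (tauM p n k s r' * QofP p n P) (Fin.last n) b.castSucc = 0 := by
  rw [Matrix.mul_apply, Fin.sum_univ_castSucc, QofP_lc, mul_zero, add_zero]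
  refine Finset.sum_eq_zero fun l _ => by rw [tauM_lc p n k s (by omega), zero_mul]

lemma B_ll : (tauM p n k s r' * QofP p n P) (Fin.last n) (Fin.last n) = 1 := by
  rw [Matrix.mul_apply, Fin.sum_univ_castSucc, QofP_ll, tauM_ll, one_mul]
  rw [Finset.sum_eq_zero fun l _ => by rw [QofP_cl, mul_zero], zero_add]

/-- the commuting-relation characterization -/
lemma Qtau_iff (hn : 2 ≤ n) (hk2 : k ≤ n - 1) :
    QofP p n P * tauM p n k s r = tauM p n k s r' * QofP p n P ↔
      (r' = P.mulVec r ∧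
       ∀ i j : Fin n, dvec p k s j.val * r j * P i ⟨n - 1, by omega⟩ =
        (if i.val = n - 1 then ∑ l : Fin n, dvec p k s l.val * P.mulVec r l * P l j else 0)) := by
  constructor
  · intro h
    have hr' : r' = P.mulVec r := by
      funext a
      have := congrFun (congrFun h a.castSucc) (Fin.last n)
      rw [A_cl, B_cl] at this
      exact this.symm
    refine ⟨hr', fun i j => ?_⟩
    have := congrFun (congrFun h i.castSucc) j.castSucc
    rw [A_cc p n k s P r hn hk2, B_cc p n k s P r' hn hk2, hr'] at this
    exact add_left_cancel this
  · rintro ⟨hr', hcond⟩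
    subst hr'
    ext i j
    induction i using Fin.lastCases with
    | last =>
      induction j using Fin.lastCases with
      | last => rw [A_ll, B_ll]
      | cast b => rw [A_lc p n k s P r hn, B_lc p n k s P _ hn]
    | cast a =>
      induction j using Fin.lastCases with
      | last => rw [A_cl, B_cl]
      | cast b =>
        rw [A_cc p n k s P r hn hk2, B_cc p n k s P _ hn hk2]
        rw [hcond a b]

/-- the algebraic characterization -/
def DM : Matrix (Fin n) (Fin n) (ZMod p) :=
  Matrix.diagonal (fun i : Fin n => dvec p k s i.val)

def Phi (P : Matrix (Fin n) (Fin n) (ZMod p)) : Prop :=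
  ∃ l : ZMod p, l ≠ 0 ∧
    (∀ i j : Fin n, j.val = n - 1 → P i j = if i.val = n - 1 then l else 0) ∧
    Pᵀ * DM p n k s * P = l • DM p n k s

lemma PtDP_apply (P : Matrix (Fin n) (Fin n) (ZMod p)) (m j : Fin n) :
    (Pᵀ * DM p n k s * P) m j = ∑ t : Fin n, dvec p k s t.val * P t m * P t j := by
  rw [Matrix.mul_assoc, Matrix.mul_apply]
  refine Finset.sum_congr rfl fun t _ => ?_
  rw [DM, Matrix.diagonal_mul, Matrix.transpose_apply]
  ring

lemma mulVec_delta (P : Matrix (Fin n) (Fin n) (ZMod p)) (m i : Fin n) :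
    P.mulVec (fun t => if t = m then (1 : ZMod p) else 0) i = P i m := by
  rw [Matrix.mulVec, dotProduct]
  simp [mul_ite]

/-- condC implies Phi, for invertible matrices -/
lemma condC_to_Phi (h1 : (1 : ZMod p) ≠ 0) (hn : 2 ≤ n) (hk : 2 ≤ k) (hk2 : k ≤ n - 1)
    (P : Matrix (Fin n) (Fin n) (ZMod p)) (Pi : Matrix (Fin n) (Fin n) (ZMod p))
    (hPi : Pi * P = 1)
    (hc : ∀ (r : Fin n → ZMod p) (i j : Fin n),
      dvec p k s j.val * r j * P i ⟨n - 1, by omega⟩ =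
        (if i.val = n - 1 then ∑ l : Fin n, dvec p k s l.val * P.mulVec r l * P l j else 0)) :
    Phi p n k s P := by
  have hkn : 0 < n := by omega
  set en1 : Fin n := ⟨n - 1, by omega⟩ with hen1
  set z0 : Fin n := ⟨0, by omega⟩ with hz0
  -- step 1: off entries of the distinguished column vanish
  have hoff : ∀ i : Fin n, i.val ≠ n - 1 → P i en1 = 0 := by
    intro i hi
    have := hc (fun t => if t = z0 then 1 else 0) i z0
    rw [if_neg hi] at this
    rw [dvec_zero p k s hk, if_pos rfl] at this
    simpa using this
  set l : ZMod p := P en1 en1 with hl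
  have hcol : ∀ i j : Fin n, j.val = n - 1 → P i j = if i.val = n - 1 then l else 0 := by
    intro i j hj
    have hj' : j = en1 := by ext; exact hj
    subst hj'
    by_cases hi : i.val = n - 1
    · have : i = en1 := by ext; exact hi
      rw [if_pos hi, this]
    · rw [if_neg hi, hoff i hi]
  have hl0 : l ≠ 0 := by
    intro h0
    -- the distinguished column of P is zero, contradicting invertibility
    have hcolz : ∀ i : Fin n, P i en1 = 0 := by
      intro i
      by_cases hi : i.val = n - 1
      · have : i = en1 := by ext; exact hi
        rw [this, ← hl, h0]
      · exact hoff i hi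
    have he : (fun t => if t = en1 then (1 : ZMod p) else 0) = 0 := by
      have h2 : P.mulVec (fun t => if t = en1 then (1 : ZMod p) else 0) = 0 := by
        funext i; rw [mulVec_delta]; exact hcolz i
      have h3 := congrArg (Pi.mulVec ·) h2
      simpa [Matrix.mulVec_mulVec, hPi, Matrix.one_mulVec] using h3
    have := congrFun he en1
    exact h1 (by simpa using this)
  refine ⟨l, hl0, hcol, ?_⟩
  ext m j
  have hPm : ∀ t : Fin n, P.mulVec (fun t => if t = m then (1 : ZMod p) else 0) t = P t m :=
    fun t => mulVec_delta p n P m t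
  have key := hc (fun t => if t = m then 1 else 0) en1 j
  rw [if_pos rfl] at key
  simp only [hPm] at key
  rw [PtDP_apply, ← key, Matrix.smul_apply, DM, Matrix.diagonal_apply, smul_eq_mul, hl]
  rcases eq_or_ne m j with h | h
  · subst h; rw [if_pos rfl, if_pos rfl]; ring
  · rw [if_neg (show ¬ j = m from fun hh => h hh.symm), if_neg h]; ring

/-- Phi implies condC -/
lemma Phi_to_condC (hn : 2 ≤ n) (hk2 : k ≤ n - 1)
    (P : Matrix (Fin n) (Fin n) (ZMod p)) (hP : Phi p n k s P) :
    ∀ (r : Fin n → ZMod p) (i j : Fin n),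
      dvec p k s j.val * r j * P i ⟨n - 1, by omega⟩ =
        (if i.val = n - 1 then ∑ l : Fin n, dvec p k s l.val * P.mulVec r l * P l j else 0) := by
  obtain ⟨l, hl0, hcol, heq⟩ := hP
  intro r i j
  by_cases hi : i.val = n - 1
  · rw [if_pos hi]
    rw [hcol i ⟨n - 1, by omega⟩ rfl, if_pos hi]
    have expand : ∀ t : Fin n, dvec p k s t.val * P.mulVec r t * P t j
        = ∑ m : Fin n, r m * (dvec p k s t.val * P t m * P t j) := by
      intro t
      rw [Matrix.mulVec, dotProduct, Finset.mul_sum, Finset.sum_mul]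
      refine Finset.sum_congr rfl fun m _ => by ring
    rw [Finset.sum_congr rfl (fun t _ => expand t), Finset.sum_comm]
    have : ∀ m : Fin n, (∑ t : Fin n, r m * (dvec p k s t.val * P t m * P t j))
        = r m * (l • DM p n k s) m j := by
      intro m
      rw [← Finset.mul_sum, ← PtDP_apply, heq]
    rw [Finset.sum_congr rfl (fun m _ => this m)]
    simp only [Matrix.smul_apply, DM, Matrix.diagonal_apply, smul_ite, smul_zero, mul_ite,
      mul_zero]
    rw [Finset.sum_ite_eq' Finset.univ j]
    simp only [Finset.mem_univ, if_pos]
    have : dvec p k s j.val = dvec p k s j.val := rfl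
    ring_nf
  · rw [if_neg hi]
    rw [hcol i ⟨n - 1, by omega⟩ rfl, if_neg hi, mul_zero]

end Products

section Grp

lemma QofP_mul (A B : Matrix (Fin n) (Fin n) (ZMod p)) :
    QofP p n (A * B) = QofP p n A * QofP p n B := by
  simp only [QofP, Matrix.reindex_apply, Matrix.submatrix_mul_equiv]
  congr 1
  rw [Matrix.fromBlocks_multiply]
  simp

lemma QofP_one : QofP p n (1 : Matrix (Fin n) (Fin n) (ZMod p)) = 1 := by
  simp only [QofP, Matrix.reindex_apply, Matrix.fromBlocks_one]
  exact Matrix.submatrix_one_equiv finSumFinEquiv.symm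

noncomputable def conjMap (P : GL (Fin n) (ZMod p)) :
    Matrix (Fin (n + 1)) (Fin (n + 1)) (ZMod p) →
      Matrix (Fin (n + 1)) (Fin (n + 1)) (ZMod p) :=
  fun M => QofP p n (P : Matrix (Fin n) (Fin n) (ZMod p)) * M *
    (QofP p n (P : Matrix (Fin n) (Fin n) (ZMod p)))⁻¹

lemma QofP_mul_inv (P : GL (Fin n) (ZMod p)) :
    QofP p n (P : Matrix (Fin n) (Fin n) (ZMod p)) *
      QofP p n ((P⁻¹ : GL (Fin n) (ZMod p)) : Matrix (Fin n) (Fin n) (ZMod p)) = 1 := by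
  rw [← QofP_mul]
  have : (P : Matrix (Fin n) (Fin n) (ZMod p)) *
      ((P⁻¹ : GL (Fin n) (ZMod p)) : Matrix (Fin n) (Fin n) (ZMod p)) = 1 := by
    exact_mod_cast P.mul_inv
  rw [this, QofP_one]

lemma QofP_inv (P : GL (Fin n) (ZMod p)) :
    (QofP p n (P : Matrix (Fin n) (Fin n) (ZMod p)))⁻¹ =
      QofP p n ((P⁻¹ : GL (Fin n) (ZMod p)) : Matrix (Fin n) (Fin n) (ZMod p)) :=
  Matrix.inv_eq_right_inv (QofP_mul_inv p n P)

lemma QofP_inv_mul (P : GL (Fin n) (ZMod p)) :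
    (QofP p n (P : Matrix (Fin n) (Fin n) (ZMod p)))⁻¹ *
      QofP p n (P : Matrix (Fin n) (Fin n) (ZMod p)) = 1 := by
  rw [QofP_inv, ← QofP_mul]
  have : ((P⁻¹ : GL (Fin n) (ZMod p)) : Matrix (Fin n) (Fin n) (ZMod p)) *
      (P : Matrix (Fin n) (Fin n) (ZMod p)) = 1 := by
    exact_mod_cast P.inv_mul
  rw [this, QofP_one]

lemma conjMap_comp (A B : GL (Fin n) (ZMod p)) (M : Matrix (Fin (n + 1)) (Fin (n + 1)) (ZMod p)) :
    conjMap p n A (conjMap p n B M) = conjMap p n (A * B) M := by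
  simp only [conjMap]
  have hAB : ((A * B : GL (Fin n) (ZMod p)) : Matrix (Fin n) (Fin n) (ZMod p)) =
      (A : Matrix (Fin n) (Fin n) (ZMod p)) * (B : Matrix (Fin n) (Fin n) (ZMod p)) := rfl
  rw [hAB, QofP_mul]
  have h1 := QofP_inv p n A
  have h2 := QofP_inv p n B
  have h3 : (QofP p n (A : Matrix (Fin n) (Fin n) (ZMod p)) *
      QofP p n (B : Matrix (Fin n) (Fin n) (ZMod p)))⁻¹ =
      (QofP p n (B : Matrix (Fin n) (Fin n) (ZMod p)))⁻¹ *
        (QofP p n (A : Matrix (Fin n) (Fin n) (ZMod p)))⁻¹ := by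
    apply Matrix.inv_eq_right_inv
    have hb1 : QofP p n (B : Matrix (Fin n) (Fin n) (ZMod p)) *
        (QofP p n (B : Matrix (Fin n) (Fin n) (ZMod p)))⁻¹ = 1 := by
      rw [h2]; exact QofP_mul_inv p n B
    have ha1 : QofP p n (A : Matrix (Fin n) (Fin n) (ZMod p)) *
        (QofP p n (A : Matrix (Fin n) (Fin n) (ZMod p)))⁻¹ = 1 := by
      rw [h1]; exact QofP_mul_inv p n A
    rw [Matrix.mul_assoc, ← Matrix.mul_assoc (QofP p n (B : Matrix (Fin n) (Fin n) (ZMod p))),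
      hb1, Matrix.one_mul, ha1]
  rw [h3]
  noncomm_ring

lemma conjMap_one (M : Matrix (Fin (n + 1)) (Fin (n + 1)) (ZMod p)) :
    conjMap p n (1 : GL (Fin n) (ZMod p)) M = M := by
  simp only [conjMap]
  have h1 : ((1 : GL (Fin n) (ZMod p)) : Matrix (Fin n) (Fin n) (ZMod p)) = 1 := rfl
  have h2 : (1 : Matrix (Fin (n + 1)) (Fin (n + 1)) (ZMod p))⁻¹ = 1 :=
    Matrix.inv_eq_right_inv (by rw [Matrix.one_mul])
  rw [h1, QofP_one, h2, Matrix.one_mul, Matrix.mul_one]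

def Hgrp : Subgroup (GL (Fin n) (ZMod p)) where
  carrier := {P | conjMap p n P '' Tset p n k s = Tset p n k s}
  one_mem' := by
    have : conjMap p n (1 : GL (Fin n) (ZMod p)) = id := funext (conjMap_one p n)
    simp [Set.mem_setOf_eq, this]
  mul_mem' := by
    intro a b ha hb
    simp only [Set.mem_setOf_eq] at *
    have : conjMap p n (a * b) = conjMap p n a ∘ conjMap p n b :=
      funext fun M => (conjMap_comp p n a b M).symm
    rw [this, Set.image_comp, hb, ha]
  inv_mem' := by
    intro a ha
    simp only [Set.mem_setOf_eq] at *
    conv_lhs => rw [← ha]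
    rw [← Set.image_comp]
    have : conjMap p n a⁻¹ ∘ conjMap p n a = id := by
      funext M
      simp only [Function.comp_apply, id_eq, conjMap_comp, inv_mul_cancel, conjMap_one]
    rw [this, Set.image_id]

noncomputable def qEquiv :
    (GL (Fin n) (ZMod p) ⧸ Hgrp p n k s) ≃
      Set.range (fun P : GL (Fin n) (ZMod p) => conjMap p n P '' Tset p n k s) := by
  apply Equiv.ofBijective
    (Quotient.lift
      (fun P : GL (Fin n) (ZMod p) =>
        (⟨conjMap p n P '' Tset p n k s, ⟨P, rfl⟩⟩ :
          Set.range (fun P : GL (Fin n) (ZMod p) => conjMap p n P '' Tset p n k s)))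
      (by
        intro a b hab
        replace hab : a⁻¹ * b ∈ Hgrp p n k s := QuotientGroup.leftRel_apply.mp hab
        have hT : conjMap p n (a⁻¹ * b) '' Tset p n k s = Tset p n k s := hab
        apply Subtype.ext
        show conjMap p n a '' Tset p n k s = conjMap p n b '' Tset p n k s
        calc conjMap p n a '' Tset p n k s
            = conjMap p n a '' (conjMap p n (a⁻¹ * b) '' Tset p n k s) := by rw [hT]
          _ = conjMap p n (a * (a⁻¹ * b)) '' Tset p n k s := by
              rw [← Set.image_comp]
              exact congrArg (fun f => f '' Tset p n k s)
                (funext fun M => conjMap_comp p n a (a⁻¹ * b) M)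
          _ = conjMap p n b '' Tset p n k s := by rw [mul_inv_cancel_left]))
  constructor
  · intro x y
    induction x using Quotient.ind
    induction y using Quotient.ind
    rename_i a b
    intro h
    have h' : conjMap p n a '' Tset p n k s = conjMap p n b '' Tset p n k s :=
      congrArg Subtype.val h
    apply Quotient.sound
    have hmem : a⁻¹ * b ∈ Hgrp p n k s := by
      show conjMap p n (a⁻¹ * b) '' Tset p n k s = Tset p n k s
      calc conjMap p n (a⁻¹ * b) '' Tset p n k s
          = conjMap p n a⁻¹ '' (conjMap p n b '' Tset p n k s) := by
            rw [← Set.image_comp]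
            exact congrArg (fun f => f '' Tset p n k s)
              (funext fun M => (conjMap_comp p n a⁻¹ b M).symm)
        _ = conjMap p n a⁻¹ '' (conjMap p n a '' Tset p n k s) := by rw [h']
        _ = conjMap p n (a⁻¹ * a) '' Tset p n k s := by
            rw [← Set.image_comp]
            exact congrArg (fun f => f '' Tset p n k s)
              (funext fun M => conjMap_comp p n a⁻¹ a M)
        _ = Tset p n k s := by
            rw [inv_mul_cancel]
            have : conjMap p n (1 : GL (Fin n) (ZMod p)) = id := funext (conjMap_one p n)
            rw [this, Set.image_id]
    exact QuotientGroup.leftRel_apply.mpr hmem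
  · rintro ⟨x, P, rfl⟩
    exact ⟨Quotient.mk _ P, rfl⟩

lemma QofP_mul_inv' (P : GL (Fin n) (ZMod p)) :
    QofP p n (P : Matrix (Fin n) (Fin n) (ZMod p)) *
      (QofP p n (P : Matrix (Fin n) (Fin n) (ZMod p)))⁻¹ = 1 := by
  rw [QofP_inv]; exact QofP_mul_inv p n P

lemma mem_Hgrp_iff (h1 : (1 : ZMod p) ≠ 0) (hn : 2 ≤ n) (hk : 2 ≤ k) (hk2 : k ≤ n - 1)
    (P : GL (Fin n) (ZMod p)) :
    P ∈ Hgrp p n k s ↔ Phi p n k s (P : Matrix (Fin n) (Fin n) (ZMod p)) := by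
  constructor
  · intro hP
    have hP' : conjMap p n P '' Tset p n k s = Tset p n k s := hP
    have hsub : ∀ r : Fin n → ZMod p, ∃ r',
        conjMap p n P (tauM p n k s r) = tauM p n k s r' := by
      intro r
      have hmem : conjMap p n P (tauM p n k s r) ∈ Tset p n k s := by
        rw [← hP']
        exact ⟨tauM p n k s r, ⟨r, rfl⟩, rfl⟩
      exact hmem
    refine condC_to_Phi p n k s h1 hn hk hk2 _
      ((P⁻¹ : GL (Fin n) (ZMod p)) : Matrix (Fin n) (Fin n) (ZMod p))
      (by exact_mod_cast P.inv_mul) ?_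
    intro r i j
    obtain ⟨r', hr'⟩ := hsub r
    have hcomm : QofP p n (P : Matrix (Fin n) (Fin n) (ZMod p)) * tauM p n k s r =
        tauM p n k s r' * QofP p n (P : Matrix (Fin n) (Fin n) (ZMod p)) := by
      have h2 := congrArg (fun M => M * QofP p n (P : Matrix (Fin n) (Fin n) (ZMod p))) hr'
      simp only [conjMap] at h2
      rw [Matrix.mul_assoc, QofP_inv_mul p n P, Matrix.mul_one] at h2
      exact h2
    exact ((Qtau_iff p n k s (P : Matrix (Fin n) (Fin n) (ZMod p)) r r' hn hk2).mp hcomm).2 i j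
  · intro hPhi
    have hcond := Phi_to_condC p n k s hn hk2 (P : Matrix (Fin n) (Fin n) (ZMod p)) hPhi
    have key : ∀ r, conjMap p n P (tauM p n k s r) =
        tauM p n k s ((P : Matrix (Fin n) (Fin n) (ZMod p)).mulVec r) := by
      intro r
      have hcomm := (Qtau_iff p n k s (P : Matrix (Fin n) (Fin n) (ZMod p)) r
        ((P : Matrix (Fin n) (Fin n) (ZMod p)).mulVec r) hn hk2).mpr
        ⟨rfl, fun i j => hcond r i j⟩
      show QofP p n (P : Matrix (Fin n) (Fin n) (ZMod p)) * tauM p n k s r *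
        (QofP p n (P : Matrix (Fin n) (Fin n) (ZMod p)))⁻¹ = _
      rw [hcomm, Matrix.mul_assoc, QofP_mul_inv' p n P, Matrix.mul_one]
    show conjMap p n P '' Tset p n k s = Tset p n k s
    ext M
    constructor
    · rintro ⟨M0, ⟨r, hM0⟩, rfl⟩
      exact ⟨(P : Matrix (Fin n) (Fin n) (ZMod p)).mulVec r, by rw [hM0, key r]⟩
    · rintro ⟨r'', rfl⟩
      refine ⟨tauM p n k s (((P⁻¹ : GL (Fin n) (ZMod p)) :
        Matrix (Fin n) (Fin n) (ZMod p)).mulVec r''), ⟨_, rfl⟩, ?_⟩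
      rw [key]
      congr 1
      rw [Matrix.mulVec_mulVec]
      rw [show (P : Matrix (Fin n) (Fin n) (ZMod p)) *
        ((P⁻¹ : GL (Fin n) (ZMod p)) : Matrix (Fin n) (Fin n) (ZMod p)) = 1
        from by exact_mod_cast P.mul_inv, Matrix.one_mulVec]

lemma card_range_eq [Fact p.Prime] :
    Nat.card (Set.range fun P : GL (Fin n) (ZMod p) => conjMap p n P '' Tset p n k s) =
      Nat.card (GL (Fin n) (ZMod p)) / Nat.card (Hgrp p n k s) := by
  have h := Subgroup.card_eq_card_quotient_mul_card_subgroup (Hgrp p n k s)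
  rw [← Nat.card_congr (qEquiv p n k s), h, Nat.mul_div_cancel]
  have : Nonempty (Hgrp p n k s) := ⟨1, (Hgrp p n k s).one_mem⟩
  exact Nat.card_pos

end Grp

section Count

def Dk : Matrix (Fin k) (Fin k) (ZMod p) :=
  Matrix.diagonal (fun i : Fin k => dvec p k s i.val)

lemma tDiag_apply {N : ℕ} (d : Fin N → ZMod p) (A : Matrix (Fin N) (Fin N) (ZMod p))
    (i j : Fin N) :
    (Aᵀ * Matrix.diagonal d * A) i j = ∑ t : Fin N, d t * A t i * A t j := by
  rw [Matrix.mul_assoc, Matrix.mul_apply]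
  refine Finset.sum_congr rfl fun t _ => ?_
  rw [Matrix.diagonal_mul, Matrix.transpose_apply]
  ring

lemma det_Dk (hk : 1 ≤ k) : (Dk p k s).det = s := by
  rw [Dk, Matrix.det_diagonal]
  rw [Finset.prod_eq_single (⟨k - 1, by omega⟩ : Fin k)]
  · show dvec p k s (k - 1) = s
    unfold dvec
    rw [if_neg (by omega), if_pos (by omega)]
  · intro b _ hb
    have : b.val + 1 < k := by
      rcases Nat.lt_or_ge (b.val + 1) k with h | h
      · exact h
      · exfalso; exact hb (by ext; simp; omega)
    unfold dvec
    rw [if_pos this]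
  · intro h
    exact absurd (Finset.mem_univ _) h

def Asp (a b : ZMod p) : Matrix (Fin k) (Fin k) (ZMod p) :=
  Matrix.of fun u v : Fin k =>
    if u.val / 2 = v.val / 2 then
      (if k ≤ v.val + 2 then
        (if u.val = v.val then 0 else if u.val < v.val then -s else 1)
      else (if u.val = v.val then a else if u.val % 2 = 0 then b else -b))
    else 0

lemma Asp_apply (a b : ZMod p) (u v : Fin k) :
    Asp p k s a b u v =
      if u.val / 2 = v.val / 2 then
        (if k ≤ v.val + 2 then
          (if u.val = v.val then 0 else if u.val < v.val then -s else 1)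
        else (if u.val = v.val then a else if u.val % 2 = 0 then b else -b))
      else 0 := rfl

lemma Asp_mult (hk2 : 2 ≤ k) (hke : Even k) (a b : ZMod p) (hab : a ^ 2 + b ^ 2 = s) :
    (Asp p k s a b)ᵀ * Dk p k s * Asp p k s a b = s • Dk p k s := by
  obtain ⟨c, hc⟩ := hke
  ext i j
  simp only [Dk]
  rw [tDiag_apply]
  by_cases hij : i.val / 2 = j.val / 2
  · set t := i.val / 2 with ht
    have hl1 : 2 * t < k := by omega
    have hl2 : 2 * t + 1 < k := by omega
    obtain ⟨l1, hv1⟩ : ∃ x : Fin k, x.val = 2 * t := ⟨⟨2 * t, hl1⟩, rfl⟩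
    obtain ⟨l2, hv2⟩ : ∃ x : Fin k, x.val = 2 * t + 1 := ⟨⟨2 * t + 1, hl2⟩, rfl⟩
    rw [Finset.sum_eq_add_of_mem l1 l2 (Finset.mem_univ _) (Finset.mem_univ _)
      (fun h => by rw [h] at hv1; omega)
      (by
        intro cc _ hcc
        have h1 : cc.val ≠ 2 * t := fun h => hcc.1 (Fin.ext (by omega))
        have h2 : cc.val ≠ 2 * t + 1 := fun h => hcc.2 (Fin.ext (by omega))
        have hne : cc.val / 2 ≠ i.val / 2 := by omega
        rw [Asp_apply, if_neg hne, mul_zero, zero_mul])]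
    rw [Matrix.smul_apply, Matrix.diagonal_apply]
    have hiv : i = l1 ∨ i = l2 := by
      have : i.val = 2 * t ∨ i.val = 2 * t + 1 := by omega
      rcases this with h | h
      · exact Or.inl (Fin.ext (by omega))
      · exact Or.inr (Fin.ext (by omega))
    have hjv : j = l1 ∨ j = l2 := by
      have : j.val = 2 * t ∨ j.val = 2 * t + 1 := by omega
      rcases this with h | h
      · exact Or.inl (Fin.ext (by omega))
      · exact Or.inr (Fin.ext (by omega))
    have hd1 : dvec p k s (l1 : Fin k).val = 1 := by
      rw [hv1]; unfold dvec; rw [if_pos (by omega)]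
    have hne12 : l1 ≠ l2 := fun h => by rw [h] at hv1; omega
    by_cases hlast : k ≤ 2 * t + 2
    · -- the last pair, block [[0, -s],[1, 0]] with d-values (1, s)
      have hd2 : dvec p k s (l2 : Fin k).val = s := by
        rw [hv2]; unfold dvec; rw [if_neg (by omega), if_pos (by omega)]
      have e11 : Asp p k s a b l1 l1 = 0 := by
        rw [Asp_apply, if_pos (by omega), if_pos (by omega), if_pos (by omega)]
      have e12 : Asp p k s a b l1 l2 = -s := by
        rw [Asp_apply, if_pos (by omega), if_pos (by omega), if_neg (by omega),
          if_pos (by omega)]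
      have e21 : Asp p k s a b l2 l1 = 1 := by
        rw [Asp_apply, if_pos (by omega), if_pos (by omega), if_neg (by omega),
          if_neg (by omega)]
      have e22 : Asp p k s a b l2 l2 = 0 := by
        rw [Asp_apply, if_pos (by omega), if_pos (by omega), if_pos (by omega)]
      rcases hiv with rfl | rfl <;> rcases hjv with rfl | rfl
      · rw [e11, e21, if_pos rfl, hd1, hd2, smul_eq_mul]; ring
      · rw [e11, e12, e21, e22, if_neg hne12, hd1, hd2, smul_zero]; ring
      · rw [e11, e12, e21, e22, if_neg (Ne.symm hne12), hd1, hd2, smul_zero]; ring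
      · rw [e12, e22, if_pos rfl, hd1, hd2, smul_eq_mul]; ring
    · -- a generic pair, block [[a, b],[-b, a]] with d-values (1, 1)
      have hd2 : dvec p k s (l2 : Fin k).val = 1 := by
        rw [hv2]; unfold dvec; rw [if_pos (by omega)]
      have e11 : Asp p k s a b l1 l1 = a := by
        rw [Asp_apply, if_pos (by omega), if_neg (by omega), if_pos (by omega)]
      have e12 : Asp p k s a b l1 l2 = b := by
        rw [Asp_apply, if_pos (by omega), if_neg (by omega), if_neg (by omega),
          if_pos (by omega)]
      have e21 : Asp p k s a b l2 l1 = -b := by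
        rw [Asp_apply, if_pos (by omega), if_neg (by omega), if_neg (by omega),
          if_neg (by omega)]
      have e22 : Asp p k s a b l2 l2 = a := by
        rw [Asp_apply, if_pos (by omega), if_neg (by omega), if_pos (by omega)]
      rcases hiv with rfl | rfl <;> rcases hjv with rfl | rfl
      · rw [e11, e21, if_pos rfl, hd1, hd2, smul_eq_mul]; linear_combination hab
      · rw [e11, e12, e21, e22, if_neg hne12, hd1, hd2, smul_zero]; ring
      · rw [e11, e12, e21, e22, if_neg (Ne.symm hne12), hd1, hd2, smul_zero]; ring
      · rw [e12, e22, if_pos rfl, hd1, hd2, smul_eq_mul]; linear_combination hab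
  · rw [Matrix.smul_apply, Matrix.diagonal_apply,
      if_neg (fun h => hij (by rw [h])), smul_zero]
    refine Finset.sum_eq_zero fun cc _ => ?_
    by_cases hci : cc.val / 2 = i.val / 2
    · rw [show Asp p k s a b cc j = 0 from by rw [Asp_apply, if_neg (by omega)], mul_zero]
    · rw [show Asp p k s a b cc i = 0 from by rw [Asp_apply, if_neg hci], mul_zero, zero_mul]

lemma exists_mult (hp : p.Prime) (hk2 : 2 ≤ k) (hke : Even k)
    (hs : s ≠ 0) (hs2 : ¬∃ t : ZMod p, t ^ 2 = s) (l : ZMod p) (hl : l ≠ 0) :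
    ∃ A : Matrix (Fin k) (Fin k) (ZMod p), Aᵀ * Dk p k s * A = l • Dk p k s := by
  haveI := Fact.mk hp
  have smul_mult : ∀ (t : ZMod p) (A : Matrix (Fin k) (Fin k) (ZMod p)),
      (t • A)ᵀ * Dk p k s * (t • A) = (t * t) • (Aᵀ * Dk p k s * A) := by
    intro t A
    rw [Matrix.transpose_smul, Matrix.smul_mul, Matrix.smul_mul, Matrix.mul_smul, smul_smul]
  by_cases hsq : IsSquare l
  · obtain ⟨t, ht⟩ := hsq
    refine ⟨t • 1, ?_⟩
    rw [smul_mult, Matrix.transpose_one, Matrix.one_mul, Matrix.mul_one, ← ht]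
  · have hss : ¬IsSquare s := by
      rintro ⟨t, ht⟩
      exact hs2 ⟨t, by rw [pow_two]; exact ht.symm⟩
    have hls : IsSquare (l * s) := by
      have h1 : quadraticChar (ZMod p) l = -1 :=
        quadraticChar_neg_one_iff_not_isSquare.mpr hsq
      have h2 : quadraticChar (ZMod p) s = -1 :=
        quadraticChar_neg_one_iff_not_isSquare.mpr hss
      have h3 : quadraticChar (ZMod p) (l * s) = 1 := by
        rw [_root_.map_mul, h1, h2]; ring
      exact (quadraticChar_one_iff_isSquare (mul_ne_zero hl hs)).mp h3
    obtain ⟨t, ht⟩ := hls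
    obtain ⟨a, b, hab⟩ := ZMod.sq_add_sq p s
    refine ⟨(t * s⁻¹) • Asp p k s a b, ?_⟩
    rw [smul_mult, Asp_mult p k s hk2 hke a b hab, smul_smul]
    congr 1
    have hsinv : s * s⁻¹ = 1 := ZMod.mul_inv_of_unit s (Ne.isUnit hs)
    calc t * s⁻¹ * (t * s⁻¹) * s = (t * t) * (s * s⁻¹) * s⁻¹ := by ring
      _ = (t * t) * s⁻¹ := by rw [hsinv]; ring
      _ = (l * s) * s⁻¹ := by rw [← ht]
      _ = l * (s * s⁻¹) := by ring
      _ = l := by rw [hsinv, mul_one]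

def eI (m : ℕ) (h : k + (m + 1) = n) : (Fin k ⊕ (Fin m ⊕ Fin 1)) ≃ Fin n :=
  (Equiv.sumCongr (Equiv.refl (Fin k)) finSumFinEquiv).trans (finSumFinEquiv.trans (finCongr h))

lemma eI_inl {m : ℕ} (h : k + (m + 1) = n) (a : Fin k) :
    (eI n k m h (Sum.inl a)).val = a.val := by
  simp [eI]

lemma eI_inr_inl {m : ℕ} (h : k + (m + 1) = n) (b : Fin m) :
    (eI n k m h (Sum.inr (Sum.inl b))).val = k + b.val := by
  simp [eI]

lemma eI_inr_inr {m : ℕ} (h : k + (m + 1) = n) (z : Fin 1) :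
    (eI n k m h (Sum.inr (Sum.inr z))).val = k + m := by
  simp [eI, Fin.ext_iff]

def Dblk (m : ℕ) : Matrix (Fin k ⊕ (Fin m ⊕ Fin 1)) (Fin k ⊕ (Fin m ⊕ Fin 1)) (ZMod p) :=
  Matrix.fromBlocks (Dk p k s) 0 0 0

lemma DM_blocks {m : ℕ} (h : k + (m + 1) = n) :
    DM p n k s = Matrix.reindex (eI n k m h) (eI n k m h) (Dblk p k s m) := by
  have key : ∀ x y, DM p n k s (eI n k m h x) (eI n k m h y) = Dblk p k s m x y := by
    intro x y
    rw [DM, Matrix.diagonal_apply]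
    rcases eq_or_ne x y with rfl | hxy
    · rw [if_pos rfl]
      rcases x with a | b | z
      · rw [show Dblk p k s m (Sum.inl a) (Sum.inl a) = dvec p k s a.val from by
          simp [Dblk, Dk, Matrix.diagonal_apply]]
        rw [eI_inl]
      · rw [show Dblk p k s m (Sum.inr (Sum.inl b)) (Sum.inr (Sum.inl b)) = 0 from by
          simp [Dblk]]
        rw [dvec_ge p k s (by rw [eI_inr_inl]; omega)]
      · rw [show Dblk p k s m (Sum.inr (Sum.inr z)) (Sum.inr (Sum.inr z)) = 0 from by
          simp [Dblk]]
        rw [dvec_ge p k s (by rw [eI_inr_inr]; omega)]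
    · rw [if_neg (fun hh => hxy ((eI n k m h).injective hh))]
      rcases x with a | b | z <;> rcases y with a' | b' | z' <;>
        simp_all [Dblk, Dk, Matrix.diagonal_apply, Matrix.fromBlocks]
  ext i j
  have := key ((eI n k m h).symm i) ((eI n k m h).symm j)
  rw [Equiv.apply_symm_apply, Equiv.apply_symm_apply] at this
  rw [this, Matrix.reindex_apply, Matrix.submatrix_apply]

def Ebigm (m : ℕ) (u : ZMod p) (E : Matrix (Fin m) (Fin m) (ZMod p)) (v : Fin m → ZMod p) :
    Matrix (Fin m ⊕ Fin 1) (Fin m ⊕ Fin 1) (ZMod p) :=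
  Matrix.fromBlocks E 0 (Matrix.of fun _ j => v j) (Matrix.of fun _ _ => u)

def gmat (m : ℕ) (h : k + (m + 1) = n) (u : ZMod p) (A : Matrix (Fin k) (Fin k) (ZMod p))
    (E : Matrix (Fin m) (Fin m) (ZMod p)) (v : Fin m → ZMod p)
    (C : Matrix (Fin m ⊕ Fin 1) (Fin k) (ZMod p)) : Matrix (Fin n) (Fin n) (ZMod p) :=
  Matrix.reindex (eI n k m h) (eI n k m h)
    (Matrix.fromBlocks A 0 C (Ebigm p m u E v))

lemma det_Ebigm (m : ℕ) (u : ZMod p) (E : Matrix (Fin m) (Fin m) (ZMod p))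
    (v : Fin m → ZMod p) : (Ebigm p m u E v).det = E.det * u := by
  rw [Ebigm, Matrix.det_fromBlocks_zero₁₂]
  congr 1
  rw [Matrix.det_fin_one]
  rfl

lemma det_gmat (m : ℕ) (h : k + (m + 1) = n) (u : ZMod p)
    (A : Matrix (Fin k) (Fin k) (ZMod p)) (E : Matrix (Fin m) (Fin m) (ZMod p))
    (v : Fin m → ZMod p) (C : Matrix (Fin m ⊕ Fin 1) (Fin k) (ZMod p)) :
    (gmat p n k m h u A E v C).det = A.det * (E.det * u) := by
  rw [gmat, Matrix.reindex_apply, Matrix.det_submatrix_equiv_self,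
    Matrix.det_fromBlocks_zero₁₂, det_Ebigm]

lemma reindex_smul {I : Type*} (e : I ≃ Fin n) (c : ZMod p)
    (X : Matrix I I (ZMod p)) :
    c • (Matrix.reindex e e X) = Matrix.reindex e e (c • X) := by
  ext i j
  simp [Matrix.reindex_apply]

lemma Phi_gmat (m : ℕ) (h : k + (m + 1) = n) (u : (ZMod p)ˣ) [Fact p.Prime]
    (A : Matrix (Fin k) (Fin k) (ZMod p)) (E : Matrix (Fin m) (Fin m) (ZMod p))
    (v : Fin m → ZMod p) (C : Matrix (Fin m ⊕ Fin 1) (Fin k) (ZMod p))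
    (hA : Aᵀ * Dk p k s * A = (u : ZMod p) • Dk p k s) :
    Phi p n k s (gmat p n k m h (u : ZMod p) A E v C) := by
  refine ⟨(u : ZMod p), u.ne_zero, ?_, ?_⟩
  · intro i j hj
    have hje : (eI n k m h).symm j = Sum.inr (Sum.inr 0) := by
      rw [Equiv.symm_apply_eq]
      ext
      rw [eI_inr_inr]
      omega
    rw [gmat, Matrix.reindex_apply, Matrix.submatrix_apply, hje]
    rcases hx : (eI n k m h).symm i with a | b | z
    · have hi : i = eI n k m h (Sum.inl a) := by rw [← hx, Equiv.apply_symm_apply]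
      have hne : i.val ≠ n - 1 := by rw [hi, eI_inl]; have := a.isLt; omega
      rw [if_neg hne]
      simp [Matrix.fromBlocks]
    · have hi : i = eI n k m h (Sum.inr (Sum.inl b)) := by rw [← hx, Equiv.apply_symm_apply]
      have hne : i.val ≠ n - 1 := by rw [hi, eI_inr_inl]; have := b.isLt; omega
      rw [if_neg hne]
      simp [Matrix.fromBlocks, Ebigm]
    · have hi : i = eI n k m h (Sum.inr (Sum.inr z)) := by rw [← hx, Equiv.apply_symm_apply]
      have heq : i.val = n - 1 := by rw [hi, eI_inr_inr]; omega
      rw [if_pos heq]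
      simp [Matrix.fromBlocks, Ebigm]
  · rw [DM_blocks p n k s h, gmat, reindex_smul, Matrix.reindex_apply, Matrix.reindex_apply,
      Matrix.reindex_apply, Matrix.transpose_submatrix, Matrix.submatrix_mul_equiv,
      Matrix.submatrix_mul_equiv]
    congr 1
    rw [Matrix.fromBlocks_transpose, Dblk, Matrix.fromBlocks_multiply,
      Matrix.fromBlocks_multiply, Matrix.fromBlocks_smul]
    simp only [Matrix.mul_zero, Matrix.zero_mul, add_zero, zero_add,
      Matrix.transpose_zero, smul_zero, Matrix.mul_one, zero_mul, mul_zero]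
    rw [hA]

lemma det_ne_of_mult [Fact p.Prime] (hk1 : 1 ≤ k) (hs : s ≠ 0) (l : ZMod p) (hl : l ≠ 0)
    (A : Matrix (Fin k) (Fin k) (ZMod p)) (hA : Aᵀ * Dk p k s * A = l • Dk p k s) :
    A.det ≠ 0 := by
  intro h0
  have hc := congrArg Matrix.det hA
  rw [Matrix.det_mul, Matrix.det_mul, Matrix.det_transpose, Matrix.det_smul,
    det_Dk p k s hk1, h0, mul_zero, Fintype.card_fin] at hc
  exact (mul_ne_zero (pow_ne_zero k hl) hs) hc.symm

lemma mult_comp (u : ZMod p) (A U : Matrix (Fin k) (Fin k) (ZMod p))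
    (hA : Aᵀ * Dk p k s * A = u • Dk p k s) (hU : Uᵀ * Dk p k s * U = Dk p k s) :
    (A * U)ᵀ * Dk p k s * (A * U) = u • Dk p k s := by
  rw [Matrix.transpose_mul]
  have h1 : Uᵀ * Aᵀ * Dk p k s * (A * U) = Uᵀ * (Aᵀ * Dk p k s * A) * U := by
    simp only [Matrix.mul_assoc]
  rw [h1, hA, Matrix.mul_smul, Matrix.smul_mul, hU]

lemma U_of_two [Fact p.Prime] (u : ZMod p) (hu : u ≠ 0)
    (A0 A : Matrix (Fin k) (Fin k) (ZMod p))
    (h0 : A0ᵀ * Dk p k s * A0 = u • Dk p k s) (hA : Aᵀ * Dk p k s * A = u • Dk p k s)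
    (hdet0 : IsUnit A0.det) :
    (A0⁻¹ * A)ᵀ * Dk p k s * (A0⁻¹ * A) = Dk p k s := by
  set B := A0⁻¹ * A with hB
  have hAB : A0 * B = A := Matrix.mul_nonsing_inv_cancel_left A0 A hdet0
  have h2 : u • Dk p k s = u • (Bᵀ * Dk p k s * B) := by
    conv_lhs => rw [← hA, ← hAB]
    rw [Matrix.transpose_mul]
    have h1 : Bᵀ * A0ᵀ * Dk p k s * (A0 * B) = Bᵀ * (A0ᵀ * Dk p k s * A0) * B := by
      simp only [Matrix.mul_assoc]
    rw [h1, h0, Matrix.mul_smul, Matrix.smul_mul]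
  have h3 := congrArg (fun X => u⁻¹ • X) h2
  simp only [smul_smul, inv_mul_cancel₀ hu, one_smul] at h3
  exact h3.symm

lemma card_Phi (hp : p.Prime) (hn : 2 ≤ n) (hk : 2 ≤ k) (hke : Even k) (hk2 : k ≤ n - 1)
    (hs : s ≠ 0) (hs2 : ¬∃ t : ZMod p, t ^ 2 = s) :
    Nat.card {P : GL (Fin n) (ZMod p) //
        Phi p n k s (P : Matrix (Fin n) (Fin n) (ZMod p))} =
      (p - 1) *
        Nat.card {U : Matrix (Fin k) (Fin k) (ZMod p) //
          Uᵀ * Dk p k s * U = Dk p k s} *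
        Nat.card (GL (Fin (n - 1 - k)) (ZMod p)) * p ^ (k * (n - 1 - k) + (n - 1)) := by
  haveI := Fact.mk hp
  set m := n - 1 - k with hm
  have h : k + (m + 1) = n := by omega
  choose Al hAl using fun u : (ZMod p)ˣ =>
    exists_mult p k s hp hk hke hs hs2 (u : ZMod p) u.ne_zero
  have detAl : ∀ u : (ZMod p)ˣ, IsUnit (Al u).det := fun u =>
    isUnit_iff_ne_zero.mpr
      (det_ne_of_mult p k s (by omega) hs (u : ZMod p) u.ne_zero (Al u) (hAl u))
  -- the parameter space
  set Ty := (ZMod p)ˣ ×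
      {U : Matrix (Fin k) (Fin k) (ZMod p) // Uᵀ * Dk p k s * U = Dk p k s} ×
      GL (Fin m) (ZMod p) × (Fin m → ZMod p) ×
      Matrix (Fin m ⊕ Fin 1) (Fin k) (ZMod p) with hTy
  have gdet : ∀ y : Ty, IsUnit (gmat p n k m h (y.1 : ZMod p) (Al y.1 * (y.2.1 : Matrix _ _ _))
      ((y.2.2.1 : Matrix (Fin m) (Fin m) (ZMod p))) y.2.2.2.1 y.2.2.2.2).det := by
    rintro ⟨u, U, E, v, C⟩
    rw [det_gmat]
    refine isUnit_iff_ne_zero.mpr (mul_ne_zero ?_ (mul_ne_zero ?_ u.ne_zero))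
    · exact det_ne_of_mult p k s (by omega) hs (u : ZMod p) u.ne_zero _
        (mult_comp p k s (u : ZMod p) (Al u) U (hAl u) U.prop)
    · have : IsUnit ((E : Matrix (Fin m) (Fin m) (ZMod p))).det :=
        (Matrix.isUnit_iff_isUnit_det _).mp ⟨E, rfl⟩
      exact this.ne_zero
  let gfun : Ty → {P : GL (Fin n) (ZMod p) //
      Phi p n k s (P : Matrix (Fin n) (Fin n) (ZMod p))} := fun y =>
    ⟨Matrix.nonsingInvUnit _ (gdet y),
      Phi_gmat p n k s m h y.1 _ _ _ _
        (mult_comp p k s (y.1 : ZMod p) (Al y.1) _ (hAl y.1) y.2.1.prop)⟩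
  have hinj : Function.Injective gfun := by
    rintro ⟨u1, U1, E1, v1, C1⟩ ⟨u2, U2, E2, v2, C2⟩ heq
    have hgm : gmat p n k m h (u1 : ZMod p) (Al u1 * (U1 : Matrix _ _ _))
          (E1 : Matrix (Fin m) (Fin m) (ZMod p)) v1 C1 =
        gmat p n k m h (u2 : ZMod p) (Al u2 * (U2 : Matrix _ _ _))
          (E2 : Matrix (Fin m) (Fin m) (ZMod p)) v2 C2 :=
      congrArg (fun z => ((z : {P : GL (Fin n) (ZMod p) // Phi p n k s _}) :
        GL (Fin n) (ZMod p)).val) heq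
    simp only [gmat] at hgm
    have hfb := (Matrix.reindex (eI n k m h) (eI n k m h)).injective hgm
    have h11 := congrArg Matrix.toBlocks₁₁ hfb
    have h21 := congrArg Matrix.toBlocks₂₁ hfb
    have h22 := congrArg Matrix.toBlocks₂₂ hfb
    simp only [Matrix.toBlocks_fromBlocks₁₁, Matrix.toBlocks_fromBlocks₂₁,
      Matrix.toBlocks_fromBlocks₂₂] at h11 h21 h22
    simp only [Ebigm] at h22
    have hE := congrArg Matrix.toBlocks₁₁ h22
    have hvr := congrArg Matrix.toBlocks₂₁ h22
    have hsc := congrArg Matrix.toBlocks₂₂ h22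
    simp only [Matrix.toBlocks_fromBlocks₁₁, Matrix.toBlocks_fromBlocks₂₁,
      Matrix.toBlocks_fromBlocks₂₂] at hE hvr hsc
    have hu' : (u1 : ZMod p) = (u2 : ZMod p) := congrFun (congrFun hsc 0) 0
    obtain rfl : u1 = u2 := Units.ext hu'
    have hU : (U1 : Matrix (Fin k) (Fin k) (ZMod p)) = U2 := by
      have h' : (Al u1)⁻¹ * (Al u1 * (U1 : Matrix (Fin k) (Fin k) (ZMod p))) =
          (Al u1)⁻¹ * (Al u1 * (U2 : Matrix (Fin k) (Fin k) (ZMod p))) := by rw [h11]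
      rwa [Matrix.nonsing_inv_mul_cancel_left _ _ (detAl u1),
        Matrix.nonsing_inv_mul_cancel_left _ _ (detAl u1)] at h'
    have hv : v1 = v2 := funext fun j => congrFun (congrFun hvr 0) j
    obtain rfl : U1 = U2 := Subtype.ext hU
    obtain rfl : E1 = E2 := Units.ext hE
    obtain rfl : v1 = v2 := hv
    obtain rfl : C1 = C2 := h21
    rfl
  have hsurj : Function.Surjective gfun := by
    rintro ⟨P, hPhi⟩
    obtain ⟨l, hl0, hcol, heqD⟩ := hPhi
    set e := eI n k m h with he
    set Mb := ((P : Matrix (Fin n) (Fin n) (ZMod p)).submatrix ⇑e ⇑e) with hMb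
    set A := Mb.toBlocks₁₁ with hA'
    set B := Mb.toBlocks₁₂ with hB'
    set C := Mb.toBlocks₂₁ with hC'
    set Eb := Mb.toBlocks₂₂ with hEb'
    have hPfb : Mb = Matrix.fromBlocks A B C Eb := (Matrix.fromBlocks_toBlocks Mb).symm
    have hsubsmul : ∀ X : Matrix (Fin n) (Fin n) (ZMod p),
        (l • X).submatrix ⇑e ⇑e = l • X.submatrix ⇑e ⇑e := by
      intro X; ext i j; simp
    have hDsub : (DM p n k s).submatrix ⇑e ⇑e = Dblk p k s m := by
      rw [DM_blocks p n k s h, Matrix.reindex_apply, Matrix.submatrix_submatrix, ← he,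
        Equiv.symm_comp_self, Matrix.submatrix_id_id]
    have hquad : Mbᵀ * Dblk p k s m * Mb = l • Dblk p k s m := by
      have h2 := congrArg (fun X => X.submatrix ⇑e ⇑e) heqD
      rw [hsubsmul, hDsub] at h2
      rw [← Matrix.submatrix_mul_equiv ((P : Matrix (Fin n) (Fin n) (ZMod p))ᵀ *
        DM p n k s) (P : Matrix (Fin n) (Fin n) (ZMod p)) _ e _] at h2
      rw [← Matrix.submatrix_mul_equiv ((P : Matrix (Fin n) (Fin n) (ZMod p))ᵀ)
        (DM p n k s) _ e _] at h2
      rw [hDsub, ← Matrix.transpose_submatrix, ← hMb] at h2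
      exact h2
    rw [hPfb] at hquad
    rw [Dblk, Matrix.fromBlocks_transpose, Matrix.fromBlocks_multiply,
      Matrix.fromBlocks_multiply, Matrix.fromBlocks_smul] at hquad
    have hqA := congrArg Matrix.toBlocks₁₁ hquad
    have hqB := congrArg Matrix.toBlocks₁₂ hquad
    simp only [Matrix.toBlocks_fromBlocks₁₁, Matrix.toBlocks_fromBlocks₁₂] at hqA hqB
    simp only [Matrix.mul_zero, Matrix.zero_mul, add_zero, zero_add, mul_zero, zero_mul,
      Matrix.transpose_zero, smul_zero] at hqA hqB
    -- hqA : Aᵀ * Dk * A = l • Dk ; hqB : Aᵀ * Dk * B = 0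
    have hAq : Aᵀ * Dk p k s * A = l • Dk p k s := by
      have : (Aᵀ * Dk p k s) * A = Aᵀ * Dk p k s * A := rfl
      linear_combination (norm := (simp only [Matrix.mul_assoc]; abel)) hqA
    have hAdet : IsUnit A.det := isUnit_iff_ne_zero.mpr
      (det_ne_of_mult p k s (by omega) hs l hl0 A hAq)
    have hADk : IsUnit ((Aᵀ * Dk p k s).det) := by
      rw [Matrix.det_mul, Matrix.det_transpose, det_Dk p k s (by omega)]
      exact isUnit_iff_ne_zero.mpr (mul_ne_zero (isUnit_iff_ne_zero.mp hAdet) hs)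
    have hB0 : B = 0 := by
      calc B = (Aᵀ * Dk p k s)⁻¹ * (Aᵀ * Dk p k s * B) :=
            (Matrix.nonsing_inv_mul_cancel_left _ _ hADk).symm
        _ = 0 := by
            rw [show Aᵀ * Dk p k s * B = 0 from by
              linear_combination (norm := (simp only [Matrix.mul_assoc]; abel)) hqB]
            exact Matrix.mul_zero _
    -- the column conditions give the structure of Eb
    have hcol' : ∀ x : Fin k ⊕ (Fin m ⊕ Fin 1),
        Mb x (Sum.inr (Sum.inr 0)) = if x = Sum.inr (Sum.inr 0) then l else 0 := by
      intro x
      have hj : (e (Sum.inr (Sum.inr 0))).val = n - 1 := by rw [he, eI_inr_inr]; omega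
      have := hcol (e x) (e (Sum.inr (Sum.inr 0))) hj
      rw [hMb, Matrix.submatrix_apply]
      rw [this]
      rcases x with a | b | z
      · rw [if_neg (by rw [he, eI_inl]; have := a.isLt; omega),
          if_neg (by simp)]
      · rw [if_neg (by rw [he, eI_inr_inl]; have := b.isLt; omega),
          if_neg (by simp)]
      · have hz : z = 0 := Subsingleton.elim z 0
        subst hz
        rw [if_pos (by rw [he, eI_inr_inr]; omega), if_pos rfl]
    set E1 := Eb.toBlocks₁₁ with hE1'
    set v := (fun j : Fin m => Eb (Sum.inr 0) (Sum.inl j)) with hv'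
    have hE12 : Eb.toBlocks₁₂ = 0 := by
      ext b z
      have hthis := hcol' (Sum.inr (Sum.inl b))
      rw [if_neg (by simp)] at hthis
      have hz : z = (0 : Fin 1) := Subsingleton.elim z 0
      subst hz
      exact hthis
    have hvr : Eb.toBlocks₂₁ = Matrix.of (fun _ j => v j) := by
      ext z j
      have hz : z = (0 : Fin 1) := Subsingleton.elim z 0
      subst hz
      rfl
    have hsc : Eb.toBlocks₂₂ = Matrix.of (fun _ _ => l) := by
      ext z z'
      have hz : z = (0 : Fin 1) := Subsingleton.elim z 0
      have hz' : z' = (0 : Fin 1) := Subsingleton.elim z' 0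
      subst hz; subst hz'
      have hthis := hcol' (Sum.inr (Sum.inr 0))
      rw [if_pos rfl] at hthis
      exact hthis
    have hEbB : Eb = Ebigm p m l E1 v := by
      rw [Ebigm, ← Matrix.fromBlocks_toBlocks Eb, hE12, hvr, hsc]
    have hdetP : IsUnit ((P : Matrix (Fin n) (Fin n) (ZMod p)).det) :=
      (Matrix.isUnit_iff_isUnit_det _).mp ⟨P, rfl⟩
    have hdetMb : Mb.det = ((P : Matrix (Fin n) (Fin n) (ZMod p))).det :=
      Matrix.det_submatrix_equiv_self e _
    have hdetE1 : IsUnit E1.det := by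
      have h3 : Mb.det = A.det * (E1.det * l) := by
        rw [hPfb, hB0, Matrix.det_fromBlocks_zero₁₂, hEbB, det_Ebigm]
      rw [hdetMb] at h3
      have := hdetP.ne_zero
      rw [h3] at this
      refine isUnit_iff_ne_zero.mpr fun h0 => this ?_
      rw [h0, zero_mul, mul_zero]
    set u : (ZMod p)ˣ := Units.mk0 l hl0 with hu'
    have hAlu : (Al u)ᵀ * Dk p k s * Al u = l • Dk p k s := hAl u
    set U := (Al u)⁻¹ * A with hU'
    have hUq : Uᵀ * Dk p k s * U = Dk p k s :=
      U_of_two p k s l hl0 (Al u) A hAlu hAq (detAl u)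
    refine ⟨(u, ⟨U, hUq⟩, Matrix.nonsingInvUnit E1 hdetE1, v, C), ?_⟩
    apply Subtype.ext
    apply Units.ext
    show gmat p n k m h (u : ZMod p) (Al u * U) E1 v C = (P : Matrix (Fin n) (Fin n) (ZMod p))
    have hAU : Al u * U = A := Matrix.mul_nonsing_inv_cancel_left _ _ (detAl u)
    rw [gmat, hAU]
    have hcoe : ((u : ZMod p)) = l := rfl
    rw [hcoe, ← hEbB, ← hB0, ← hPfb, hMb, ← he, Matrix.reindex_apply,
      Matrix.submatrix_submatrix, Equiv.self_comp_symm, Matrix.submatrix_id_id]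
  have hcard := Nat.card_congr (Equiv.ofBijective gfun ⟨hinj, hsurj⟩)
  rw [← hcard]
  have hstep : Nat.card Ty = Nat.card (ZMod p)ˣ *
      (Nat.card {U : Matrix (Fin k) (Fin k) (ZMod p) // Uᵀ * Dk p k s * U = Dk p k s} *
        (Nat.card (GL (Fin m) (ZMod p)) *
          (Nat.card (Fin m → ZMod p) *
            Nat.card (Matrix (Fin m ⊕ Fin 1) (Fin k) (ZMod p))))) := by
    rw [hTy, Nat.card_prod, Nat.card_prod, Nat.card_prod, Nat.card_prod]
  rw [hstep]
  have c1 : Nat.card (ZMod p)ˣ = p - 1 := by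
    rw [Nat.card_eq_fintype_card, ZMod.card_units]
  have c2 : Nat.card (Fin m → ZMod p) = p ^ m := by
    rw [Nat.card_eq_fintype_card, Fintype.card_fun, ZMod.card, Fintype.card_fin]
  have c3 : Nat.card (Matrix (Fin m ⊕ Fin 1) (Fin k) (ZMod p)) = (p ^ k) ^ (m + 1) := by
    rw [Nat.card_congr (Matrix.of (α := ZMod p) (m := Fin m ⊕ Fin 1) (n := Fin k)).symm,
      Nat.card_eq_fintype_card, Fintype.card_fun, Fintype.card_fun, ZMod.card,
      Fintype.card_fin, Fintype.card_sum, Fintype.card_fin, Fintype.card_fin]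
  rw [c1, c2, c3]
  have hn1 : n - 1 = k + m := by omega
  rw [hn1, ← pow_mul, ← pow_add]
  ring

end Count

end Stmt10


/-- For `k` even and `s` a nonsquare, the number of distinct
conjugates of `T(n,k,s)` under `Q_P` for `P ∈ GL_n(Fp)` equals `|GL_n|`
divided by `(p-1)·|O_k^-|·|GL_{n-1-k}|·p^{k(n-1-k)+(n-1)}`, where `O_k^-` is
the group of `U` with `Uᵀ·D_s·U = D_s`, `D_s = diag(1,…,1,s)`. -/
theorem stmt_10 (p : ℕ) (hp : p.Prime) (hodd : Odd p) (n k : ℕ)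
    (hn : 2 ≤ n) (hk1 : 1 ≤ k) (hk2 : k ≤ n - 1) (hkeven : Even k)
    (s : ZMod p) (hs : s ≠ 0) (hs2 : ¬∃ t : ZMod p, t ^ 2 = s) :
    Nat.card (Set.range fun P : GL (Fin n) (ZMod p) =>
        (fun M => QofP p n (P : Matrix (Fin n) (Fin n) (ZMod p)) * M *
            (QofP p n (P : Matrix (Fin n) (Fin n) (ZMod p)))⁻¹) ''
          Tset p n k s) =
      Nat.card (GL (Fin n) (ZMod p)) /
        ((p - 1) *
          Nat.card {U : Matrix (Fin k) (Fin k) (ZMod p) //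
            Uᵀ * Matrix.diagonal (fun i : Fin k => dvec p k s i.val) * U =
              Matrix.diagonal (fun i : Fin k => dvec p k s i.val)} *
          Nat.card (GL (Fin (n - 1 - k)) (ZMod p)) *
          p ^ (k * (n - 1 - k) + (n - 1))) := by
  haveI := Fact.mk hp
  have hk : 2 ≤ k := by obtain ⟨c, hc⟩ := hkeven; omega
  have h1 : (1 : ZMod p) ≠ 0 := one_ne_zero
  have hrange : (Set.range fun P : GL (Fin n) (ZMod p) =>
      (fun M => QofP p n (P : Matrix (Fin n) (Fin n) (ZMod p)) * M *
          (QofP p n (P : Matrix (Fin n) (Fin n) (ZMod p)))⁻¹) '' Tset p n k s) =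
      Set.range fun P : GL (Fin n) (ZMod p) => Stmt10.conjMap p n P '' Tset p n k s := rfl
  rw [hrange, Stmt10.card_range_eq p n k s]
  congr 1
  have e1 : Nat.card (Stmt10.Hgrp p n k s) =
      Nat.card {P : GL (Fin n) (ZMod p) //
        Stmt10.Phi p n k s (P : Matrix (Fin n) (Fin n) (ZMod p))} :=
    Nat.card_congr
      (Equiv.subtypeEquivRight (fun P => Stmt10.mem_Hgrp_iff p n k s h1 hn hk hk2 P))
  rw [e1, Stmt10.card_Phi p n k s hp hn hk hkeven hk2 hs hs2]
  rfl
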